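/- Fix k ≥ 1, s = (s₁,…,s_k) ∈ ℤ^k, r = (r₁,…,r_k) ∈ ℝ_{>0}^k, and x ∈ ℝ_{≥0}. For each complex ε with Re(ε) < 0, the series Z(s;r;ε,x) = Σ_{n₁ > n₂ > ⋯ > n_k > 0} ∏_{i=1}^{k} e^{(n_i + x) r_i ε} / (n_i + x)^{s_i} (sum over k-tuples of positive integers) converges absolutely, and the function ε ↦ Z(s;r;ε,x) is complex-differentiable on the half-plane Re(ε) < 0 with derivative (∂/∂ε) Z(s;r;ε,x) = Σ_{i=1}^{k} r_i · Z(s − e_i; r; ε, x), where e_i ∈ ℤ^k is the i-th standard unit vector. -/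

import Mathlib

open Complex

/-- The index set of the sum defining multiple zeta values: strictly decreasing
`k`-tuples of positive integers `n₁ > n₂ > ⋯ > n_k > 0`. -/
def DecreasingTuples (k : ℕ) : Type :=
  {n : Fin k → ℕ // StrictAnti n ∧ ∀ i, 0 < n i}

/-- The summand of the directional regularized multiple zeta value
`Z(s; r; ε, x) = Σ_{n₁ > ⋯ > n_k > 0} ∏ᵢ e^{(nᵢ+x) rᵢ ε} / (nᵢ+x)^{sᵢ}`. -/
noncomputable def Zterm (k : ℕ) (s : Fin k → ℤ) (r : Fin k → ℝ) (x : ℝ) (ε : ℂ)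
    (n : Fin k → ℕ) : ℂ :=
  ∏ i, Complex.exp (((((n i : ℝ) + x) * r i : ℝ)) * ε) / (((n i : ℝ) + x : ℝ) : ℂ) ^ (s i)

lemma mzv_single_summable (m : ℤ) (c x : ℝ) (hc : c < 0) (hx : 0 ≤ x) :
    Summable (fun n : ℕ => Real.exp (((n : ℝ) + x) * c) * ((n : ℝ) + x) ^ m) := by
  rw [← summable_nat_add_iff 1]
  set t := m.toNat with ht
  set q := Real.exp c with hq
  have hq1 : q < 1 := Real.exp_lt_one_iff.mpr hc
  have hq0 : 0 < q := Real.exp_pos c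
  have hS : Summable (fun n : ℕ => (Real.exp (c * x) * (1 + x) ^ t) * ((n : ℝ) ^ t * q ^ n)) := by
    have := summable_pow_mul_geometric_of_norm_lt_one (R := ℝ) t (r := q)
      (by rwa [Real.norm_eq_abs, abs_of_pos hq0])
    exact this.mul_left _
  have hS' := (summable_nat_add_iff 1).mpr hS
  apply Summable.of_nonneg_of_le (fun n => ?_) (fun n => ?_) hS'
  · positivity
  · have hpos : (0 : ℝ) < ((n + 1 : ℕ) : ℝ) + x := by positivity
    have hb : ((n + 1 : ℕ) : ℝ) + x = ((n : ℝ) + 1) + x := by push_cast; ring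
    have hexp : Real.exp ((((n + 1 : ℕ) : ℝ) + x) * c) = Real.exp (c * x) * q ^ (n + 1) := by
      rw [hq, ← Real.exp_nat_mul, ← Real.exp_add]
      congr 1
      push_cast
      ring
    have hzp : (((n + 1 : ℕ) : ℝ) + x) ^ m ≤ (1 + x) ^ t * ((n + 1 : ℕ) : ℝ) ^ t := by
      rcases le_or_gt 0 m with hm | hm
      · have : (((n + 1 : ℕ) : ℝ) + x) ^ m = (((n + 1 : ℕ) : ℝ) + x) ^ t := by
          rw [ht, ← zpow_natCast, Int.toNat_of_nonneg hm]
        rw [this]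
        have hle : ((n + 1 : ℕ) : ℝ) + x ≤ (1 + x) * ((n + 1 : ℕ) : ℝ) := by
          push_cast; nlinarith
        calc (((n + 1 : ℕ) : ℝ) + x) ^ t ≤ ((1 + x) * ((n + 1 : ℕ) : ℝ)) ^ t :=
              pow_le_pow_left₀ hpos.le hle t
          _ = (1 + x) ^ t * ((n + 1 : ℕ) : ℝ) ^ t := mul_pow _ _ _
      · have h0 : t = 0 := by rw [ht]; omega
        rw [h0]
        simp only [pow_zero, mul_one, one_mul]
        apply zpow_le_one_of_nonpos₀
        · rw [hb]; linarith
        · exact hm.le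
    calc Real.exp ((((n + 1 : ℕ) : ℝ) + x) * c) * (((n + 1 : ℕ) : ℝ) + x) ^ m
        ≤ (Real.exp (c * x) * q ^ (n + 1)) * ((1 + x) ^ t * ((n + 1 : ℕ) : ℝ) ^ t) := by
          rw [hexp]
          apply mul_le_mul_of_nonneg_left hzp
          positivity
      _ = Real.exp (c * x) * (1 + x) ^ t * (((n + 1 : ℕ) : ℝ) ^ t * q ^ (n + 1)) := by
          push_cast; ring

lemma mzv_pi_summable : ∀ (k : ℕ) (g : Fin k → ℕ → ℝ), (∀ i, Summable (g i)) →
    (∀ i n, 0 ≤ g i n) → Summable (fun f : Fin k → ℕ => ∏ i, g i (f i)) := by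
  intro k
  induction k with
  | zero =>
    intro g _ _
    exact Summable.of_finite
  | succ k ih =>
    intro g hg h0
    have htail : Summable (fun f : Fin k → ℕ => ∏ i, g i.succ (f i)) :=
      ih (fun i => g i.succ) (fun i => hg _) (fun i n => h0 _ _)
    have key : ∀ (g0 : ℕ → ℝ) (G : (Fin k → ℕ) → ℝ), Summable g0 → Summable G →
        0 ≤ g0 → 0 ≤ G → Summable (fun p : ℕ × (Fin k → ℕ) => g0 p.1 * G p.2) :=
      fun g0 G h h' h1 h2 => Summable.mul_of_nonneg h h' h1 h2
    have hprod := key _ _ (hg 0) htail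
      (fun n => h0 0 n) (fun f => Finset.prod_nonneg fun i _ => h0 _ _)
    have := (Fin.consEquiv fun _ : Fin (k+1) => ℕ).symm.summable_iff.mpr hprod
    apply this.congr
    intro f
    rw [Function.comp_apply, Fin.prod_univ_succ]
    simp [Fin.consEquiv, Fin.tail]

lemma mzv_norm_Zterm (k : ℕ) (s : Fin k → ℤ) (r : Fin k → ℝ) (x : ℝ) (hx : 0 ≤ x)
    (ε : ℂ) (n : Fin k → ℕ) (hn : ∀ i, 0 < n i) :
    ‖Zterm k s r x ε n‖ =
      ∏ i, Real.exp (((n i : ℝ) + x) * (r i * ε.re)) * ((n i : ℝ) + x) ^ (-(s i)) := by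
  unfold Zterm
  rw [norm_prod]
  apply Finset.prod_congr rfl
  intro i _
  have hpos : (0 : ℝ) < (n i : ℝ) + x := by
    have : (1 : ℝ) ≤ (n i : ℝ) := by exact_mod_cast hn i
    linarith
  rw [norm_div, norm_zpow, Complex.norm_exp, re_ofReal_mul,
    Complex.norm_real, Real.norm_eq_abs, abs_of_pos hpos, zpow_neg, div_eq_mul_inv,
    mul_assoc]

lemma mzv_summable (k : ℕ) (s : Fin k → ℤ) (r : Fin k → ℝ) (hr : ∀ i, 0 < r i)
    (x : ℝ) (hx : 0 ≤ x) (ε : ℂ) (hε : ε.re < 0) :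
    Summable (fun n : DecreasingTuples k => Zterm k s r x ε n.1) := by
  have hG : Summable (fun f : Fin k → ℕ =>
      ∏ i, Real.exp (((f i : ℝ) + x) * (r i * ε.re)) * ((f i : ℝ) + x) ^ (-(s i))) :=
    mzv_pi_summable k
      (fun i m => Real.exp (((m : ℝ) + x) * (r i * ε.re)) * ((m : ℝ) + x) ^ (-(s i)))
      (fun i => mzv_single_summable (-(s i)) (r i * ε.re) x
        (mul_neg_of_pos_of_neg (hr i) hε) hx)
      (fun i m => by positivity)
  have hsub : Summable (fun n : DecreasingTuples k =>
      ∏ i, Real.exp (((n.1 i : ℝ) + x) * (r i * ε.re)) * ((n.1 i : ℝ) + x) ^ (-(s i))) :=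
    hG.comp_injective (Subtype.val_injective)
  apply Summable.of_norm
  exact hsub.congr (fun n => (mzv_norm_Zterm k s r x hx ε n.1 n.2.2).symm)

lemma mzv_hasDerivAt_term (k : ℕ) (s : Fin k → ℤ) (r : Fin k → ℝ) (x : ℝ)
    (n : Fin k → ℕ) (hn : ∀ i, 0 < n i) (hx : 0 ≤ x) (ε : ℂ) :
    HasDerivAt (fun ε' : ℂ => Zterm k s r x ε' n)
      (((∑ i, (((n i : ℝ) + x) * r i) : ℝ) : ℂ) * Zterm k s r x ε n) ε := by
  set C : ℝ := ∑ i, (((n i : ℝ) + x) * r i) with hC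
  have key : ∀ ε' : ℂ, Zterm k s r x ε' n =
      Complex.exp ((C : ℂ) * ε') * (∏ i, (((n i : ℝ) + x : ℝ) : ℂ) ^ (s i))⁻¹ := by
    intro ε'
    unfold Zterm
    rw [Finset.prod_div_distrib, div_eq_mul_inv, ← Complex.exp_sum]
    congr 2
    rw [hC]
    push_cast
    rw [Finset.sum_mul]
  have hD : HasDerivAt (fun ε' : ℂ =>
      Complex.exp ((C : ℂ) * ε') * (∏ i, (((n i : ℝ) + x : ℝ) : ℂ) ^ (s i))⁻¹)
      ((Complex.exp ((C : ℂ) * ε) * ((C : ℂ) * 1)) *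
        (∏ i, (((n i : ℝ) + x : ℝ) : ℂ) ^ (s i))⁻¹) ε :=
    (((hasDerivAt_id ε).const_mul (C : ℂ)).cexp).mul_const _
  have heq : (fun ε' : ℂ => Zterm k s r x ε' n) =
      fun ε' : ℂ => Complex.exp ((C : ℂ) * ε') * (∏ i, (((n i : ℝ) + x : ℝ) : ℂ) ^ (s i))⁻¹ :=
    funext key
  rw [heq, key ε]
  convert hD using 1
  ring

lemma mzv_shift (k : ℕ) (s : Fin k → ℤ) (r : Fin k → ℝ) (x : ℝ) (ε : ℂ)
    (n : Fin k → ℕ) (hn : ∀ i, 0 < n i) (hx : 0 ≤ x) (i : Fin k) :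
    Zterm k (s - Pi.single i 1) r x ε n = (((n i : ℝ) + x : ℝ) : ℂ) * Zterm k s r x ε n := by
  have hpos : ∀ j, (0 : ℝ) < (n j : ℝ) + x := by
    intro j
    have : (1 : ℝ) ≤ (n j : ℝ) := by exact_mod_cast hn j
    linarith
  have hd : ∀ j, (((n j : ℝ) + x : ℝ) : ℂ) ≠ 0 := by
    intro j
    exact_mod_cast (hpos j).ne'
  unfold Zterm
  have step : ∀ j ∈ Finset.univ,
      Complex.exp (((((n j : ℝ) + x) * r j : ℝ)) * ε) /
          (((n j : ℝ) + x : ℝ) : ℂ) ^ ((s - Pi.single i 1 : Fin k → ℤ) j) =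
        (if j = i then (((n j : ℝ) + x : ℝ) : ℂ) else 1) *
          (Complex.exp (((((n j : ℝ) + x) * r j : ℝ)) * ε) /
            (((n j : ℝ) + x : ℝ) : ℂ) ^ (s j)) := by
    intro j _
    by_cases hji : j = i
    · subst hji
      simp only [eq_self_iff_true, if_true, Pi.sub_apply, Pi.single_eq_same]
      rw [zpow_sub_one₀ (hd j), div_eq_mul_inv, mul_inv, inv_inv, div_eq_mul_inv]
      ring
    · simp [hji, Pi.single_eq_of_ne hji]
  rw [Finset.prod_congr rfl step, Finset.prod_mul_distrib, Finset.prod_ite_eq']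
  simp
theorem regularized_MZV_summable_and_hasDerivAt
    (k : ℕ) (hk : 1 ≤ k) (s : Fin k → ℤ) (r : Fin k → ℝ) (hr : ∀ i, 0 < r i)
    (x : ℝ) (hx : 0 ≤ x) :
    (∀ ε : ℂ, ε.re < 0 →
      Summable (fun n : DecreasingTuples k => Zterm k s r x ε n.1)) ∧
    (∀ ε : ℂ, ε.re < 0 →
      HasDerivAt (fun ε' : ℂ => ∑' n : DecreasingTuples k, Zterm k s r x ε' n.1)
        (∑ i : Fin k, (r i : ℂ) *
          ∑' n : DecreasingTuples k, Zterm k (s - Pi.single i 1) r x ε n.1)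
        ε) := by
  constructor
  · intro ε hε
    exact mzv_summable k s r hr x hx ε hε
  · intro ε hε
    set δ : ℝ := ε.re / 2 with hδdef
    have hδ0 : δ < 0 := by rw [hδdef]; linarith
    set t : Set ℂ := {z : ℂ | z.re < δ} with htdef
    have hto : IsOpen t := isOpen_lt Complex.continuous_re continuous_const
    have htc : IsPreconnected t := (convex_halfSpace_re_lt δ).isPreconnected
    have hεt : ε ∈ t := by
      show ε.re < δ
      rw [hδdef]; linarith
    set u : DecreasingTuples k → ℝ := fun n =>
      (∑ i, r i) *
        ∏ i, Real.exp (((n.1 i : ℝ) + x) * (r i * δ)) * ((n.1 i : ℝ) + x) ^ (1 - s i)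
      with hudef
    have hu : Summable u := by
      have hG : Summable (fun f : Fin k → ℕ =>
          ∏ i, Real.exp (((f i : ℝ) + x) * (r i * δ)) * ((f i : ℝ) + x) ^ (1 - s i)) :=
        mzv_pi_summable k
          (fun i m => Real.exp (((m : ℝ) + x) * (r i * δ)) * ((m : ℝ) + x) ^ (1 - s i))
          (fun i => mzv_single_summable (1 - s i) (r i * δ) x
            (mul_neg_of_pos_of_neg (hr i) hδ0) hx)
          (fun i m => by positivity)
      exact (hG.comp_injective Subtype.val_injective).mul_left _
    set g' : DecreasingTuples k → ℂ → ℂ := fun n y =>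
      ((∑ i, (((n.1 i : ℝ) + x) * r i) : ℝ) : ℂ) * Zterm k s r x y n.1 with hg'def
    have hg : ∀ (n : DecreasingTuples k) (y : ℂ), y ∈ t →
        HasDerivAt (fun z : ℂ => Zterm k s r x z n.1) (g' n y) y :=
      fun n y _ => mzv_hasDerivAt_term k s r x n.1 n.2.2 hx y
    have hbd : ∀ (n : DecreasingTuples k) (y : ℂ), y ∈ t → ‖g' n y‖ ≤ u n := by
      intro n y hy
      have hyd : y.re < δ := hy
      have hA1 : ∀ j, (1 : ℝ) ≤ (n.1 j : ℝ) + x := by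
        intro j
        have : (1 : ℝ) ≤ (n.1 j : ℝ) := by exact_mod_cast n.2.2 j
        linarith
      have hA0 : ∀ j, (0 : ℝ) < (n.1 j : ℝ) + x := fun j => zero_lt_one.trans_le (hA1 j)
      have hnorm : ‖g' n y‖ = (∑ i, (((n.1 i : ℝ) + x) * r i)) *
          ∏ i, Real.exp (((n.1 i : ℝ) + x) * (r i * y.re)) * ((n.1 i : ℝ) + x) ^ (-(s i)) := by
        rw [hg'def]
        rw [norm_mul, mzv_norm_Zterm k s r x hx y n.1 n.2.2, Complex.norm_real,
          Real.norm_eq_abs, _root_.abs_of_nonneg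
            (Finset.sum_nonneg fun i _ => mul_nonneg (hA0 i).le (hr i).le)]
      rw [hnorm]
      have h1 : (∑ i, (((n.1 i : ℝ) + x) * r i)) ≤ (∏ j, ((n.1 j : ℝ) + x)) * ∑ i, r i := by
        rw [Finset.mul_sum]
        apply Finset.sum_le_sum
        intro i _
        apply mul_le_mul_of_nonneg_right _ (hr i).le
        rw [← Finset.mul_prod_erase Finset.univ (fun j => ((n.1 j : ℝ) + x)) (Finset.mem_univ i)]
        apply le_mul_of_one_le_right (hA0 i).le
        calc (1 : ℝ) = ∏ _j ∈ Finset.univ.erase i, (1 : ℝ) := (Finset.prod_const_one).symm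
          _ ≤ ∏ j ∈ Finset.univ.erase i, ((n.1 j : ℝ) + x) :=
              Finset.prod_le_prod (fun j _ => zero_le_one) (fun j _ => hA1 j)
      have h2 : (∏ i, Real.exp (((n.1 i : ℝ) + x) * (r i * y.re)) * ((n.1 i : ℝ) + x) ^ (-(s i)))
          ≤ ∏ i, Real.exp (((n.1 i : ℝ) + x) * (r i * δ)) * ((n.1 i : ℝ) + x) ^ (-(s i)) := by
        apply Finset.prod_le_prod
        · intro i _; positivity
        · intro i _
          apply mul_le_mul_of_nonneg_right _ (zpow_nonneg (hA0 i).le _)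
          apply Real.exp_le_exp.mpr
          apply mul_le_mul_of_nonneg_left _ (hA0 i).le
          exact mul_le_mul_of_nonneg_left hyd.le (hr i).le
      calc (∑ i, (((n.1 i : ℝ) + x) * r i)) *
            ∏ i, Real.exp (((n.1 i : ℝ) + x) * (r i * y.re)) * ((n.1 i : ℝ) + x) ^ (-(s i))
          ≤ ((∏ j, ((n.1 j : ℝ) + x)) * ∑ i, r i) *
            ∏ i, Real.exp (((n.1 i : ℝ) + x) * (r i * δ)) * ((n.1 i : ℝ) + x) ^ (-(s i)) := by
            apply mul_le_mul h1 h2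
            · apply Finset.prod_nonneg; intro i _; positivity
            · apply mul_nonneg (Finset.prod_nonneg fun j _ => (hA0 j).le)
                (Finset.sum_nonneg fun i _ => (hr i).le)
        _ = u n := by
            simp only [hudef]
            have hfac : ∀ i ∈ Finset.univ,
                Real.exp (((n.1 i : ℝ) + x) * (r i * δ)) * ((n.1 i : ℝ) + x) ^ (1 - s i) =
                ((n.1 i : ℝ) + x) *
                  (Real.exp (((n.1 i : ℝ) + x) * (r i * δ)) * ((n.1 i : ℝ) + x) ^ (-(s i))) := by
              intro i _
              rw [sub_eq_add_neg, zpow_add₀ (hA0 i).ne', zpow_one]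
              ring
            rw [Finset.prod_congr rfl hfac]
            simp only [Finset.prod_mul_distrib]
            ring
    have hds := hasDerivAt_tsum_of_isPreconnected hu hto htc hg hbd hεt
      (mzv_summable k s r hr x hx ε hε) hεt
    refine hds.congr_deriv ?_
    symm
    have hterm : ∀ n : DecreasingTuples k,
        g' n ε = ∑ i, (r i : ℂ) * Zterm k (s - Pi.single i 1) r x ε n.1 := by
      intro n
      rw [hg'def]
      push_cast
      rw [Finset.sum_mul]
      apply Finset.sum_congr rfl
      intro i _
      rw [mzv_shift k s r x ε n.1 n.2.2 hx i]
      push_cast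
      ring
    rw [tsum_congr hterm]
    have hml : ∀ i : Fin k, (r i : ℂ) *
        (∑' n : DecreasingTuples k, Zterm k (s - Pi.single i 1) r x ε n.1) =
        ∑' n : DecreasingTuples k, (r i : ℂ) * Zterm k (s - Pi.single i 1) r x ε n.1 :=
      fun i => tsum_mul_left.symm
    rw [Finset.sum_congr rfl (fun i _ => hml i)]
    exact (Summable.tsum_finsetSum
      (fun i _ => (mzv_summable k (s - Pi.single i 1) r hr x hx ε hε).mul_left _)).symm
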